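/- arXiv:0809.4775 — 2 statements merged into one kernel-verified Lean document; each statement's English description precedes it below -/
import Mathlib

section
/- Let k ∈ ℕ and let {I_j}_{j=1,...,2^k} be intervals covering ℝ with pairwise disjoint interiors. For an integer n₀, let h(n₀)+1 be the number of intervals I_j intersecting (n₀, n₀+1), and let Z̃ be the set of integers n₀ such that (n₀,n₀+1) contains no integer endpoint structure as in the construction (i.e., (n₀,n₀+1) meets none of the maximal integer-endpoint subintervals of the I_j). Then 0 ≤ h(n₀) ≤ 2^k for each n₀ and Σ_{n₀ ∈ Z̃} h(n₀) ≤ 2^{k+1}. -/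
open Set

noncomputable section
open scoped Classical

/-- The maximal open subinterval of `I` with integer endpoints: `(z_j, z_{j+1})` where
`z_j` is the least and `z_{j+1}` the greatest element of `ℤ ∪ {±∞}` contained in `I`. -/
def intTilde (I : Set ℝ) : Set ℝ :=
  ⋃ (a : ℤ) (_ : (a : ℝ) ∈ I) (b : ℤ) (_ : (b : ℝ) ∈ I), Set.Ioo (a : ℝ) (b : ℝ)

/-- `h(n₀)`: one less than the number of intervals of the family meeting `(n₀, n₀+1)`. -/
def hcount (k : ℕ) (I : Fin (2 ^ k) → Set ℝ) (n₀ : ℤ) : ℕ :=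
  (Finset.univ.filter fun j => (I j ∩ Set.Ioo (n₀ : ℝ) ((n₀ : ℝ) + 1)).Nonempty).card - 1

theorem stmt3 (k : ℕ) (I : Fin (2 ^ k) → Set ℝ)
    (hI : ∀ j, (I j).OrdConnected)
    (hcov : (⋃ j, I j) = Set.univ)
    (hdisj : Pairwise fun j j' => Disjoint (interior (I j)) (interior (I j'))) :
    (∀ n₀ : ℤ, hcount k I n₀ ≤ 2 ^ k) ∧
      ∀ S : Finset ℤ,
        (∀ n₀ ∈ S, Disjoint (Set.Ioo (n₀ : ℝ) ((n₀ : ℝ) + 1)) (⋃ j, intTilde (I j))) →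
        ∑ n₀ ∈ S, hcount k I n₀ ≤ 2 ^ (k + 1) := by
  constructor
  · intro n₀
    calc hcount k I n₀
        ≤ (Finset.univ.filter fun j =>
            (I j ∩ Set.Ioo (n₀ : ℝ) ((n₀ : ℝ) + 1)).Nonempty).card := Nat.sub_le _ _
      _ ≤ (Finset.univ : Finset (Fin (2 ^ k))).card := Finset.card_filter_le _ _
      _ = 2 ^ k := by simp
  · intro S hS
    have key : ∀ j : Fin (2 ^ k),
        (S.filter fun (n₀ : ℤ) => (I j ∩ Set.Ioo (n₀ : ℝ) ((n₀ : ℝ) + 1)).Nonempty).card ≤ 2 := by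
      intro j
      by_contra h
      push_neg at h
      have mid : ∀ x y z : ℤ, x < y → y < z →
          x ∈ (S.filter fun (n₀ : ℤ) => (I j ∩ Set.Ioo (n₀ : ℝ) ((n₀ : ℝ) + 1)).Nonempty) →
          y ∈ (S.filter fun (n₀ : ℤ) => (I j ∩ Set.Ioo (n₀ : ℝ) ((n₀ : ℝ) + 1)).Nonempty) →
          z ∈ (S.filter fun (n₀ : ℤ) => (I j ∩ Set.Ioo (n₀ : ℝ) ((n₀ : ℝ) + 1)).Nonempty) → False := by
        intro x y z hxy hyz hx hy hz
        simp only [Finset.mem_filter] at hx hy hz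
        obtain ⟨hxS, p, hpI, hpx⟩ := hx
        obtain ⟨hyS, -⟩ := hy
        obtain ⟨hzS, q, hqI, hqz⟩ := hz
        -- the integers x+1 and z lie in I j
        have hxz : (x : ℝ) + 1 ≤ (z : ℝ) := by exact_mod_cast (by omega : x + 1 ≤ z)
        have haI : ((x + 1 : ℤ) : ℝ) ∈ I j := by
          apply (hI j).out hpI hqI
          constructor
          · push_cast; linarith [hpx.2]
          · push_cast; linarith [hqz.1, hxz]
        have hbI : ((z : ℤ) : ℝ) ∈ I j := by
          apply (hI j).out hpI hqI
          constructor
          · push_cast; linarith [hpx.2, hxz]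
          · push_cast; linarith [hqz.1]
        -- the point y + 1/2 lies in (x+1, z) ⊆ intTilde (I j) and in (y, y+1)
        have hy1 : ((y : ℝ) + 1/2) ∈ Set.Ioo ((x : ℝ) + 1) (z : ℝ) := by
          have h1 : (x : ℝ) + 1 ≤ (y : ℝ) := by exact_mod_cast (by omega : x + 1 ≤ y)
          have h2 : (y : ℝ) + 1 ≤ (z : ℝ) := by exact_mod_cast (by omega : y + 1 ≤ z)
          constructor <;> [linarith; linarith]
        have hmem : ((y : ℝ) + 1/2) ∈ intTilde (I j) := by
          simp only [intTilde, Set.mem_iUnion]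
          exact ⟨x + 1, by exact_mod_cast haI, z, hbI, by exact_mod_cast hy1⟩
        have hmem2 : ((y : ℝ) + 1/2) ∈ Set.Ioo (y : ℝ) ((y : ℝ) + 1) := by
          constructor <;> linarith
        exact (hS y hyS).ne_of_mem hmem2 (Set.mem_iUnion.mpr ⟨j, hmem⟩) rfl
      obtain ⟨a, b, c, ha, hb, hc, hab, hac, hbc⟩ := Finset.two_lt_card_iff.mp h
      rcases lt_trichotomy a b with h1 | h1 | h1
      · rcases lt_trichotomy b c with h2 | h2 | h2
        · exact mid a b c h1 h2 ha hb hc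
        · exact absurd h2 hbc
        · rcases lt_trichotomy a c with h3 | h3 | h3
          · exact mid a c b h3 h2 ha hc hb
          · exact absurd h3 hac
          · exact mid c a b h3 h1 hc ha hb
      · exact absurd h1 hab
      · rcases lt_trichotomy a c with h2 | h2 | h2
        · exact mid b a c h1 h2 hb ha hc
        · exact absurd h2 hac
        · rcases lt_trichotomy b c with h3 | h3 | h3
          · exact mid b c a h3 h2 hb hc ha
          · exact absurd h3 hbc
          · exact mid c b a h3 h1 hc hb ha
    calc ∑ n₀ ∈ S, hcount k I n₀
        ≤ ∑ n₀ ∈ S, (Finset.univ.filter fun j =>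
            (I j ∩ Set.Ioo (n₀ : ℝ) ((n₀ : ℝ) + 1)).Nonempty).card :=
          Finset.sum_le_sum fun _ _ => Nat.sub_le _ _
      _ = ∑ j : Fin (2 ^ k), (S.filter fun (n₀ : ℤ) =>
            (I j ∩ Set.Ioo (n₀ : ℝ) ((n₀ : ℝ) + 1)).Nonempty).card := by
          simp only [Finset.card_filter]
          exact Finset.sum_comm
      _ ≤ ∑ _j : Fin (2 ^ k), 2 := Finset.sum_le_sum fun j _ => key j
      _ = 2 ^ (k + 1) := by simp [pow_succ, mul_comm]
end
end

section
/- Let P : ℝ → ℝ be continuous, let a < b be reals, and for j = 1,2 let E_j ∈ ℝ with E₁ ≠ E₂, and let u_j ∈ C²([a,b]) be nonzero solutions of −u_j'' + P·u_j = E_j·u_j on [a,b] with u_j(a) = u_j(b) = 0 and u_j(x) ≠ 0 for all x ∈ (a,b). Then it is impossible that |u₁(x)| = |u₂(x)| for all x ∈ [a,b]. -/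
open Set

theorem stmt8 (P : ℝ → ℝ) (hP : Continuous P) (a b : ℝ) (hab : a < b)
    (E₁ E₂ : ℝ) (hE : E₁ ≠ E₂) (u₁ u₂ : ℝ → ℝ)
    (hu₁ : ContDiff ℝ 2 u₁) (hu₂ : ContDiff ℝ 2 u₂)
    (heq₁ : ∀ x ∈ Set.Icc a b, deriv (deriv u₁) x = (P x - E₁) * u₁ x)
    (heq₂ : ∀ x ∈ Set.Icc a b, deriv (deriv u₂) x = (P x - E₂) * u₂ x)
    (hbc₁a : u₁ a = 0) (hbc₁b : u₁ b = 0) (hbc₂a : u₂ a = 0) (hbc₂b : u₂ b = 0)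
    (hnz₁ : ∀ x ∈ Set.Ioo a b, u₁ x ≠ 0) (hnz₂ : ∀ x ∈ Set.Ioo a b, u₂ x ≠ 0) :
    ¬ ∀ x ∈ Set.Icc a b, |u₁ x| = |u₂ x| := by
  intro h
  set x₀ : ℝ := (a + b) / 2 with hx₀
  have hmem : x₀ ∈ Set.Ioo a b := ⟨by linarith, by linarith⟩
  have hmemI : x₀ ∈ Set.Icc a b := ⟨by linarith, by linarith⟩
  have h1 := hnz₁ x₀ hmem
  have h2 := hnz₂ x₀ hmem
  have hg : Continuous (fun x => u₁ x * u₂ x) := hu₁.continuous.mul hu₂.continuous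
  have hIoo : ∀ᶠ x in nhds x₀, x ∈ Set.Ioo a b :=
    Filter.eventually_of_mem (isOpen_Ioo.mem_nhds hmem) (fun x hx => hx)
  rcases abs_eq_abs.mp (h x₀ hmemI) with h0 | h0
  · -- u₁ x₀ = u₂ x₀
    have hpos : 0 < u₁ x₀ * u₂ x₀ := by rw [h0]; exact mul_self_pos.mpr h2
    have hev1 : ∀ᶠ x in nhds x₀, 0 < u₁ x * u₂ x :=
      Filter.eventually_of_mem ((isOpen_lt continuous_const hg).mem_nhds hpos)
        (fun x hx => hx)
    have hev : u₁ =ᶠ[nhds x₀] u₂ := by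
      filter_upwards [hev1, hIoo] with x hx1 hx2
      rcases abs_eq_abs.mp (h x (Set.Ioo_subset_Icc_self hx2)) with e | e
      · exact e
      · exfalso; rw [e] at hx1; nlinarith [sq_nonneg (u₂ x)]
    have hd : deriv (deriv u₁) x₀ = deriv (deriv u₂) x₀ := hev.deriv.deriv.eq_of_nhds
    rw [heq₁ x₀ hmemI, heq₂ x₀ hmemI, h0] at hd
    have : E₁ = E₂ := by
      have := mul_right_cancel₀ h2 hd
      linarith
    exact hE this
  · -- u₁ x₀ = -u₂ x₀
    have hneg : u₁ x₀ * u₂ x₀ < 0 := by rw [h0]; nlinarith [mul_self_pos.mpr h2]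
    have hev1 : ∀ᶠ x in nhds x₀, u₁ x * u₂ x < 0 :=
      Filter.eventually_of_mem ((isOpen_lt hg continuous_const).mem_nhds hneg)
        (fun x hx => hx)
    have hev : u₁ =ᶠ[nhds x₀] (fun x => -u₂ x) := by
      filter_upwards [hev1, hIoo] with x hx1 hx2
      rcases abs_eq_abs.mp (h x (Set.Ioo_subset_Icc_self hx2)) with e | e
      · exfalso; rw [e] at hx1; nlinarith [mul_self_pos.mpr (hnz₂ x hx2)]
      · exact e
    have hd : deriv (deriv u₁) x₀ = deriv (deriv (fun x => -u₂ x)) x₀ :=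
      hev.deriv.deriv.eq_of_nhds
    have hd2 : deriv (deriv (fun x => -u₂ x)) x₀ = -(deriv (deriv u₂) x₀) := by
      have : deriv (fun x => -u₂ x) = fun x => -(deriv u₂ x) := by
        funext x; exact deriv.neg
      rw [this]
      exact deriv.neg
    rw [hd2, heq₁ x₀ hmemI, heq₂ x₀ hmemI, h0] at hd
    have : E₁ = E₂ := by
      have h2' : -u₂ x₀ ≠ 0 := neg_ne_zero.mpr h2
      have := mul_right_cancel₀ h2 (by linarith : (P x₀ - E₁) * u₂ x₀ = (P x₀ - E₂) * u₂ x₀)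
      linarith
    exact hE this
end
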